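/- arXiv:2504.18098 — 2 statements merged into one kernel-verified Lean document; each statement's English description precedes it below -/
import Mathlib

section
/- W_α is a genuine witness of magic for mixed states: if ρ is an n-qubit state and W_α(ρ) > 0 for some real α ≥ 1/2 with α ≠ 1, then ρ is not a mixed stabilizer state, i.e. ρ cannot be written as a finite convex combination of projectors onto pure stabilizer states. -/
open Matrix Complex BigOperators
open scoped ComplexOrder

noncomputable section

/-- Index type for `n` qubits: functions `Fin n → Fin 2` (cardinality `2^n`). -/
abbrev QIdx (n : ℕ) := Fin n → Fin 2

/-- The four single-qubit Pauli matrices: `σ⁰ = I`, `σ¹ = σˣ`, `σ² = σᶻ`, `σ³ = σʸ`. -/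
def pauliMat : Fin 4 → Matrix (Fin 2) (Fin 2) ℂ
  | 0 => 1
  | 1 => !![0, 1; 1, 0]
  | 2 => !![1, 0; 0, -1]
  | 3 => !![0, -Complex.I; Complex.I, 0]

/-- The Pauli string `σ^{a_1} ⊗ ⋯ ⊗ σ^{a_n}` as a `2^n × 2^n` matrix. -/
def pauliString {n : ℕ} (a : Fin n → Fin 4) : Matrix (QIdx n) (QIdx n) ℂ :=
  fun i j => ∏ k, pauliMat (a k) (i k) (j k)

/-- An `n`-qubit state: positive semidefinite with unit trace. -/
def IsState {n : ℕ} (ρ : Matrix (QIdx n) (QIdx n) ℂ) : Prop :=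
  ρ.PosSemidef ∧ ρ.trace = 1

/-- The `α`-moment of the Pauli spectrum `A_α(ρ) = 2^{-n} ∑_P |tr(ρP)|^{2α}`. -/
def Amom {n : ℕ} (α : ℝ) (ρ : Matrix (QIdx n) (QIdx n) ℂ) : ℝ :=
  ((2:ℝ)^n)⁻¹ * ∑ a : Fin n → Fin 4, ‖(ρ * pauliString a).trace‖ ^ (2 * α)

/-- The 2-Rényi entropy `S₂(ρ) = -ln tr(ρ²)`. -/
def S2 {n : ℕ} (ρ : Matrix (QIdx n) (QIdx n) ℂ) : ℝ :=
  - Real.log ((ρ * ρ).trace.re)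

/-- The magic witness `W_α(ρ) = (1/(1-α)) ln A_α(ρ) - ((1-2α)/(1-α)) S₂(ρ)`. -/
def Wit {n : ℕ} (α : ℝ) (ρ : Matrix (QIdx n) (QIdx n) ℂ) : ℝ :=
  (1 / (1 - α)) * Real.log (Amom α ρ) - ((1 - 2*α)/(1 - α)) * S2 ρ

/-- The stabilizer norm `D(ρ) = A_{1/2}(ρ) = 2^{-n} ∑_P |tr(ρP)|`. -/
def Dnorm {n : ℕ} (ρ : Matrix (QIdx n) (QIdx n) ℂ) : ℝ :=
  Amom (1/2) ρ

/-- A Clifford unitary: unitary mapping every Pauli string to `±` a Pauli string. -/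
def IsCliffordUnitary {n : ℕ} (U : Matrix (QIdx n) (QIdx n) ℂ) : Prop :=
  U ∈ Matrix.unitaryGroup (QIdx n) ℂ ∧
    ∀ a : Fin n → Fin 4, ∃ (b : Fin n → Fin 4) (ε : ℝ),
      (ε = 1 ∨ ε = -1) ∧ U * pauliString a * Uᴴ = (ε : ℂ) • pauliString b

/-- The computational all-zeros basis vector `|0⟩^{⊗n}`. -/
def zeroVec (n : ℕ) : QIdx n → ℂ :=
  fun i => if (∀ k, i k = 0) then 1 else 0

/-- A pure stabilizer state vector: `U|0⟩^{⊗n}` for a Clifford unitary `U`. -/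
def IsPureStab {n : ℕ} (ψ : QIdx n → ℂ) : Prop :=
  ∃ U, IsCliffordUnitary U ∧ ψ = U.mulVec (zeroVec n)

/-- The rank-one projector `|ψ⟩⟨ψ|`. -/
def proj {n : ℕ} (ψ : QIdx n → ℂ) : Matrix (QIdx n) (QIdx n) ℂ :=
  Matrix.vecMulVec ψ (star ψ)

/-- A mixed stabilizer state: a finite convex combination of pure stabilizer projectors. -/
def IsMixedStab {n : ℕ} (ρ : Matrix (QIdx n) (QIdx n) ℂ) : Prop :=
  ∃ (k : ℕ) (p : Fin k → ℝ) (ψ : Fin k → QIdx n → ℂ),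
    (∀ i, 0 ≤ p i) ∧ (∑ i, p i = 1) ∧ (∀ i, IsPureStab (ψ i)) ∧
    ρ = ∑ i, (p i : ℂ) • proj (ψ i)

/-- The set of values `ln ∑ᵢ |xᵢ|` over finite real stabilizer decompositions of `ρ`. -/
def StabDecomps {n : ℕ} (ρ : Matrix (QIdx n) (QIdx n) ℂ) : Set ℝ :=
  { r | ∃ (k : ℕ) (x : Fin k → ℝ) (ψ : Fin k → QIdx n → ℂ),
      (∀ i, IsPureStab (ψ i)) ∧ ρ = ∑ i, (x i : ℂ) • proj (ψ i) ∧
      r = Real.log (∑ i, |x i|) }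

/-- The log-free robustness of magic. -/
def LR {n : ℕ} (ρ : Matrix (QIdx n) (QIdx n) ℂ) : ℝ := sInf (StabDecomps ρ)

open Classical in
/-- Positive-semidefinite square root (junk value `0` off the PSD cone). -/
def psdSqrt {n : ℕ} (A : Matrix (QIdx n) (QIdx n) ℂ) : Matrix (QIdx n) (QIdx n) ℂ :=
  if h : A.PosSemidef then
    (h.1.eigenvectorUnitary : Matrix (QIdx n) (QIdx n) ℂ) *
      diagonal ((↑) ∘ Real.sqrt ∘ h.1.eigenvalues) *
      (star h.1.eigenvectorUnitary : Matrix (QIdx n) (QIdx n) ℂ)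
  else 0

/-- The Uhlmann fidelity `F(ρ,σ) = (tr √(√ρ σ √ρ))²`. -/
def fidelity {n : ℕ} (ρ σ : Matrix (QIdx n) (QIdx n) ℂ) : ℝ :=
  ((psdSqrt (psdSqrt ρ * σ * psdSqrt ρ)).trace.re) ^ 2

/-- The stabilizer fidelity `D_F(ρ) = inf { -ln F(ρ,σ) : σ a mixed stabilizer state }`. -/
def DF {n : ℕ} (ρ : Matrix (QIdx n) (QIdx n) ℂ) : ℝ :=
  sInf { r | ∃ σ, IsMixedStab σ ∧ r = - Real.log (fidelity ρ σ) }

/-- Filtered Pauli moment `Ã_α(ρ) = (2^n A_α(ρ) - 1)/(2^n - 1)`. -/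
def Atil {n : ℕ} (α : ℝ) (ρ : Matrix (QIdx n) (QIdx n) ℂ) : ℝ :=
  ((2:ℝ)^n * Amom α ρ - 1) / ((2:ℝ)^n - 1)

/-- Filtered stabilizer norm `D̃(ρ) = (2^n D(ρ) - 1)/(2^n - 1)`. -/
def Dtil {n : ℕ} (ρ : Matrix (QIdx n) (QIdx n) ℂ) : ℝ :=
  ((2:ℝ)^n * Dnorm ρ - 1) / ((2:ℝ)^n - 1)

/-- Filtered magic witness `W̃_α(ρ) = (1/(1-α)) ln Ã_α(ρ) + ((1-2α)/(1-α)) ln Ã₁(ρ)`. -/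
def Wtil {n : ℕ} (α : ℝ) (ρ : Matrix (QIdx n) (QIdx n) ℂ) : ℝ :=
  (1/(1-α)) * Real.log (Atil α ρ) + ((1 - 2*α)/(1-α)) * Real.log (Atil 1 ρ)

/-- The maximally mixed state `I/2^n`. -/
def maxMixed (n : ℕ) : Matrix (QIdx n) (QIdx n) ℂ := ((2:ℂ)^n)⁻¹ • 1

/-- The single-qubit T-state vector `|T⟩ = (|0⟩ + e^{-iπ/4}|1⟩)/√2`. -/
def Tket : QIdx 1 → ℂ :=
  fun i => if i 0 = 0 then (Real.sqrt 2 : ℂ)⁻¹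
           else Complex.exp (-(Real.pi/4 : ℂ) * Complex.I) * (Real.sqrt 2 : ℂ)⁻¹

/-- The depolarized T-state `ρ_p = (1-p)|T⟩⟨T| + p·I₂/2`. -/
def rhoDep (p : ℝ) : Matrix (QIdx 1) (QIdx 1) ℂ :=
  ((1 - p : ℝ) : ℂ) • proj Tket + ((p : ℝ) : ℂ) • (((2:ℂ))⁻¹ • 1)


lemma pauli_entry_sum (i j k l : Fin 2) :
    ∑ m : Fin 4, pauliMat m i j * pauliMat m k l = if i = l ∧ j = k then 2 else 0 := by
  fin_cases i <;> fin_cases j <;> fin_cases k <;> fin_cases l <;>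
    norm_num [pauliMat, Fin.sum_univ_four, Matrix.one_apply, Complex.ext_iff, Fin.ext_iff]

lemma pauli_trace_single (c d : Fin 4) :
    ∑ u : Fin 2, ∑ v : Fin 2, pauliMat c u v * pauliMat d v u = if c = d then 2 else 0 := by
  fin_cases c <;> fin_cases d <;>
    norm_num [pauliMat, Fin.sum_univ_two, Matrix.one_apply, Complex.ext_iff]

lemma sum_fn_prod {n m : ℕ} {R : Type*} [CommSemiring R] (f : Fin n → Fin m → R) :
    ∑ a : Fin n → Fin m, ∏ k, f k (a k) = ∏ k, ∑ c, f k c :=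
  (Fintype.prod_sum f).symm

lemma sum_pair_prod {n : ℕ} {R : Type*} [CommSemiring R] (f : Fin n → Fin 2 → Fin 2 → R) :
    ∑ x : QIdx n, ∑ y : QIdx n, ∏ k, f k (x k) (y k) = ∏ k, ∑ u : Fin 2, ∑ v : Fin 2, f k u v := by
  have h1 : ∀ k, ∑ u : Fin 2, ∑ v : Fin 2, f k u v = ∑ p : Fin 2 × Fin 2, f k p.1 p.2 :=
    fun k => (Fintype.sum_prod_type (fun p : Fin 2 × Fin 2 => f k p.1 p.2)).symm
  have h2 : (∏ k, ∑ p : Fin 2 × Fin 2, f k p.1 p.2)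
      = ∑ g : Fin n → Fin 2 × Fin 2, ∏ k, f k (g k).1 (g k).2 :=
    Fintype.prod_sum (fun k (p : Fin 2 × Fin 2) => f k p.1 p.2)
  have h3 : (∑ x : QIdx n, ∑ y : QIdx n, ∏ k, f k (x k) (y k))
      = ∑ p : QIdx n × QIdx n, ∏ k, f k (p.1 k) (p.2 k) :=
    (Fintype.sum_prod_type (f := fun p : QIdx n × QIdx n => ∏ k, f k (p.1 k) (p.2 k))).symm
  have h4 : (∑ g : Fin n → Fin 2 × Fin 2, ∏ k, f k (g k).1 (g k).2)
      = ∑ p : QIdx n × QIdx n, ∏ k, f k (p.1 k) (p.2 k) :=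
    Fintype.sum_equiv (Equiv.arrowProdEquivProdArrow (Fin n) (fun _ => Fin 2) (fun _ => Fin 2)) _ _ (fun g => rfl)
  simp only [h1, h2, h4, h3]

/-- product of indicator-like factors -/
lemma prod_ite_two {n : ℕ} (p : Fin n → Prop) [DecidablePred p] :
    (∏ k, if p k then (2:ℂ) else 0) = if (∀ k, p k) then (2:ℂ)^n else 0 := by
  by_cases h : ∀ k, p k
  · simp [h]
  · push_neg at h
    obtain ⟨k, hk⟩ := h
    rw [if_neg (by push_neg; exact ⟨k, hk⟩)]
    exact Finset.prod_eq_zero (Finset.mem_univ k) (by simp [hk])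

lemma pauliString_orthogonal {n : ℕ} (a b : Fin n → Fin 4) :
    (pauliString a * pauliString b).trace = if a = b then (2:ℂ)^n else 0 := by
  have : (pauliString a * pauliString b).trace
      = ∑ x : QIdx n, ∑ y : QIdx n, ∏ k, (pauliMat (a k) (x k) (y k) * pauliMat (b k) (y k) (x k)) := by
    simp only [Matrix.trace, Matrix.diag, Matrix.mul_apply, pauliString]
    exact Finset.sum_congr rfl fun x _ => Finset.sum_congr rfl fun y _ =>
      (Finset.prod_mul_distrib).symm
  rw [this, sum_pair_prod (f := fun k u v => pauliMat (a k) u v * pauliMat (b k) v u)]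
  simp only [pauli_trace_single]
  rw [prod_ite_two]
  simp [funext_iff]

lemma pauli_sum_entries {n : ℕ} (x y z w : QIdx n) :
    ∑ a : Fin n → Fin 4, pauliString a x y * pauliString a z w
      = if x = w ∧ y = z then (2:ℂ)^n else 0 := by
  have : ∀ a : Fin n → Fin 4, pauliString a x y * pauliString a z w
      = ∏ k, (pauliMat (a k) (x k) (y k) * pauliMat (a k) (z k) (w k)) := by
    intro a; exact (Finset.prod_mul_distrib).symm
  simp only [this]
  rw [sum_fn_prod (f := fun k c => pauliMat c (x k) (y k) * pauliMat c (z k) (w k))]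
  simp only [pauli_entry_sum]
  have := prod_ite_two (n := n) (fun k => x k = w k ∧ y k = z k)
  rw [this]
  simp [funext_iff, forall_and]

lemma trace_pauli_sum {n : ℕ} (A B : Matrix (QIdx n) (QIdx n) ℂ) :
    ∑ a : Fin n → Fin 4, (A * pauliString a).trace * (B * pauliString a).trace
      = (2:ℂ)^n * (A * B).trace := by
  have htr : ∀ (M : Matrix (QIdx n) (QIdx n) ℂ) (a : Fin n → Fin 4),
      (M * pauliString a).trace = ∑ p : QIdx n × QIdx n, M p.1 p.2 * pauliString a p.2 p.1 := by
    intro M a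
    rw [Fintype.sum_prod_type (f := fun p : QIdx n × QIdx n => M p.1 p.2 * pauliString a p.2 p.1)]
    simp only [Matrix.trace, Matrix.diag, Matrix.mul_apply]
  simp only [htr]
  have hswap : ∀ a : Fin n → Fin 4,
      (∑ p : QIdx n × QIdx n, A p.1 p.2 * pauliString a p.2 p.1) *
      (∑ q : QIdx n × QIdx n, B q.1 q.2 * pauliString a q.2 q.1)
      = ∑ p : QIdx n × QIdx n, ∑ q : QIdx n × QIdx n,
          (A p.1 p.2 * B q.1 q.2) * (pauliString a p.2 p.1 * pauliString a q.2 q.1) := by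
    intro a
    rw [Finset.sum_mul_sum]
    exact Finset.sum_congr rfl fun p _ => Finset.sum_congr rfl fun q _ => by ring
  simp only [hswap]
  rw [Finset.sum_comm]
  have h2 : ∀ p : QIdx n × QIdx n,
      (∑ a : Fin n → Fin 4, ∑ q : QIdx n × QIdx n,
        (A p.1 p.2 * B q.1 q.2) * (pauliString a p.2 p.1 * pauliString a q.2 q.1))
      = (2:ℂ)^n * (A p.1 p.2 * B p.2 p.1) := by
    intro p
    rw [Finset.sum_comm]
    have h3 : ∀ q : QIdx n × QIdx n,
        (∑ a : Fin n → Fin 4,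
          (A p.1 p.2 * B q.1 q.2) * (pauliString a p.2 p.1 * pauliString a q.2 q.1))
        = (A p.1 p.2 * B q.1 q.2) * (if q = (p.1, p.2).swap then (2:ℂ)^n else 0) := by
      intro q
      rw [← Finset.mul_sum, pauli_sum_entries]
      congr 1
      congr 1
      simp [Prod.ext_iff, Prod.swap, eq_comm, and_comm]
    simp only [h3]
    simp only [mul_ite, mul_zero]
    rw [Finset.sum_ite_eq' Finset.univ ((p.1, p.2).swap : QIdx n × QIdx n)
      (fun q => A p.1 p.2 * B q.1 q.2 * (2:ℂ)^n)]
    simp [mul_comm, mul_assoc, mul_left_comm]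
  simp only [h2]
  rw [← Finset.mul_sum]
  congr 1
  rw [Fintype.sum_prod_type (f := fun p : QIdx n × QIdx n => A p.1 p.2 * B p.2 p.1)]
  simp only [Matrix.trace, Matrix.diag, Matrix.mul_apply]


lemma pauliMat_star (c : Fin 4) (i j : Fin 2) : star (pauliMat c i j) = pauliMat c j i := by
  fin_cases c <;> fin_cases i <;> fin_cases j <;>
    norm_num [pauliMat, Matrix.one_apply, Complex.ext_iff, Fin.ext_iff]

lemma pauliString_herm {n : ℕ} (a : Fin n → Fin 4) : (pauliString a)ᴴ = pauliString a := by
  ext i j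
  simp only [Matrix.conjTranspose_apply, pauliString, star_prod]
  exact Finset.prod_congr rfl fun k _ => pauliMat_star _ _ _

lemma pauliString_zero_eq_one {n : ℕ} :
    pauliString (fun _ => (0 : Fin 4)) = (1 : Matrix (QIdx n) (QIdx n) ℂ) := by
  ext i j
  simp only [pauliString, pauliMat]
  by_cases h : i = j
  · subst h; simp [Matrix.one_apply]
  · rw [Matrix.one_apply_ne h]
    obtain ⟨k, hk⟩ : ∃ k, i k ≠ j k := by
      by_contra hc; push_neg at hc; exact h (funext hc)
    exact Finset.prod_eq_zero (Finset.mem_univ k) (by simp [Matrix.one_apply, hk])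

lemma trace_pauli_real {n : ℕ} {ρ : Matrix (QIdx n) (QIdx n) ℂ} (hρ : ρ.IsHermitian)
    (a : Fin n → Fin 4) :
    ((ρ * pauliString a).trace) = (((ρ * pauliString a).trace.re : ℝ) : ℂ) := by
  have hc : (starRingEnd ℂ) ((ρ * pauliString a).trace) = (ρ * pauliString a).trace := by
    have h1 : ((ρ * pauliString a)ᴴ).trace = star ((ρ * pauliString a).trace) :=
      Matrix.trace_conjTranspose _
    rw [Matrix.conjTranspose_mul, pauliString_herm, hρ.eq, Matrix.trace_mul_comm] at h1
    exact h1.symm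
  exact (Complex.conj_eq_iff_re.mp hc).symm

lemma proj_mulVec {n : ℕ} (U : Matrix (QIdx n) (QIdx n) ℂ) (v : QIdx n → ℂ) :
    proj (U.mulVec v) = U * proj v * Uᴴ := by
  ext i j
  simp only [proj, Matrix.vecMulVec_apply, Matrix.mul_apply, Matrix.mulVec, dotProduct,
    Pi.star_apply, Matrix.conjTranspose_apply, star_sum, star_mul', Finset.sum_mul,
    Finset.mul_sum]
  exact Finset.sum_congr rfl fun k _ => Finset.sum_congr rfl fun l _ => by ring

lemma trace_proj_pauli_zero {n : ℕ} (a : Fin n → Fin 4) :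
    (proj (zeroVec n) * pauliString a).trace = ∏ k, pauliMat (a k) 0 0 := by
  classical
  have hz : zeroVec n = fun i : QIdx n => if i = (fun _ => 0) then (1:ℂ) else 0 := by
    funext i; simp [zeroVec, funext_iff]
  rw [hz]
  simp only [Matrix.trace, Matrix.diag, Matrix.mul_apply, proj, Matrix.vecMulVec_apply,
    Pi.star_apply, apply_ite (star : ℂ → ℂ), star_one, star_zero, ite_mul, one_mul, zero_mul,
    mul_ite, mul_zero, mul_one]
  simp [Finset.sum_ite_eq', pauliString]

lemma sum_abs_proj_zero {n : ℕ} :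
    ∑ a : Fin n → Fin 4, ‖(proj (zeroVec n) * pauliString a).trace‖ = (2:ℝ)^n := by
  simp only [trace_proj_pauli_zero]
  have h1 : ∀ a : Fin n → Fin 4, ‖∏ k, pauliMat (a k) 0 0‖
      = ∏ k, ‖pauliMat (a k) 0 0‖ := fun a => norm_prod _ _
  simp only [h1]
  rw [sum_fn_prod (f := fun _ c => ‖pauliMat c 0 0‖)]
  have h2 : ∑ c : Fin 4, ‖pauliMat c 0 0‖ = 2 := by
    norm_num [Fin.sum_univ_four, pauliMat, Matrix.one_apply]
  rw [Finset.prod_congr rfl (fun k _ => h2), Finset.prod_const]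
  simp


lemma sum_abs_pureStab {n : ℕ} {ψ : QIdx n → ℂ} (h : IsPureStab ψ) :
    ∑ a : Fin n → Fin 4, ‖(proj ψ * pauliString a).trace‖ = (2:ℝ)^n := by
  obtain ⟨U, ⟨hUmem, hCl⟩, rfl⟩ := h
  choose b ε hε heq using hCl
  have hU1 : U * Uᴴ = 1 := by
    have := (Matrix.mem_unitaryGroup_iff).mp hUmem
    rwa [Matrix.star_eq_conjTranspose] at this
  have hU2 : Uᴴ * U = 1 := by
    have := (Matrix.mem_unitaryGroup_iff').mp hUmem
    rwa [Matrix.star_eq_conjTranspose] at this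
  have hsq : ∀ a, ((ε a : ℂ)) * ((ε a : ℂ)) = 1 := by
    intro a; rcases hε a with h' | h' <;> rw [h'] <;> norm_num
  have hconj : ∀ a, Uᴴ * pauliString (b a) * U = (ε a : ℂ) • pauliString a := by
    intro a
    have h1 : Uᴴ * (U * pauliString a * Uᴴ) * U = pauliString a := by
      calc Uᴴ * (U * pauliString a * Uᴴ) * U
          = (Uᴴ * U) * pauliString a * (Uᴴ * U) := by
            simp only [Matrix.mul_assoc]
        _ = pauliString a := by rw [hU2]; simp
    rw [heq a] at h1
    have h2 : Uᴴ * ((ε a : ℂ) • pauliString (b a)) * U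
        = (ε a : ℂ) • (Uᴴ * pauliString (b a) * U) := by
      simp [Matrix.mul_smul, Matrix.smul_mul]
    rw [h2] at h1
    calc Uᴴ * pauliString (b a) * U
        = ((ε a : ℂ) * (ε a : ℂ)) • (Uᴴ * pauliString (b a) * U) := by rw [hsq a, one_smul]
      _ = (ε a : ℂ) • ((ε a : ℂ) • (Uᴴ * pauliString (b a) * U)) := by rw [mul_smul]
      _ = (ε a : ℂ) • pauliString a := by rw [h1]
  have hinj : Function.Injective b := by
    intro a a' hbb
    by_contra hne
    have h1 : (ε a : ℂ) • pauliString a = (ε a' : ℂ) • pauliString a' := by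
      rw [← hconj a, ← hconj a', hbb]
    have h2 := congrArg (fun M => (M * pauliString a).trace) h1
    simp only [Matrix.smul_mul, Matrix.trace_smul] at h2
    rw [pauliString_orthogonal, pauliString_orthogonal, if_pos rfl,
      if_neg (fun hh => hne (hh.symm))] at h2
    rw [smul_zero, smul_eq_mul] at h2
    have hz : (ε a : ℂ) ≠ 0 := by
      rcases hε a with h' | h' <;> rw [h'] <;> norm_num
    have : ((2:ℂ)^n) ≠ 0 := by positivity
    exact this (by
      have := mul_eq_zero.mp h2
      tauto)
  have hterm : ∀ a, ((proj (U.mulVec (zeroVec n)) * pauliString (b a)).trace)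
      = (ε a : ℂ) * (proj (zeroVec n) * pauliString a).trace := by
    intro a
    rw [proj_mulVec]
    have e1 : U * proj (zeroVec n) * Uᴴ * pauliString (b a)
        = U * (proj (zeroVec n) * (Uᴴ * pauliString (b a))) := by
      simp only [Matrix.mul_assoc]
    rw [e1, Matrix.trace_mul_comm]
    have e2 : proj (zeroVec n) * (Uᴴ * pauliString (b a)) * U
        = proj (zeroVec n) * (Uᴴ * pauliString (b a) * U) := by
      simp only [Matrix.mul_assoc]
    rw [e2, hconj a, Matrix.mul_smul, Matrix.trace_smul, smul_eq_mul]
  have hbij : Function.Bijective b := Finite.injective_iff_bijective.mp hinj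
  rw [← sum_abs_proj_zero (n := n)]
  refine (Fintype.sum_bijective b hbij _ _ ?_).symm
  intro a
  rw [hterm a, norm_mul]
  rcases hε a with h' | h' <;> rw [h'] <;> simp

lemma sum_abs_mixedStab {n : ℕ} {ρ : Matrix (QIdx n) (QIdx n) ℂ} (h : IsMixedStab ρ) :
    ∑ a : Fin n → Fin 4, ‖(ρ * pauliString a).trace‖ ≤ (2:ℝ)^n := by
  obtain ⟨k, p, ψ, hp0, hp1, hψ, rfl⟩ := h
  have hterm : ∀ a : Fin n → Fin 4, ((∑ i, (p i : ℂ) • proj (ψ i)) * pauliString a).trace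
      = ∑ i, (p i : ℂ) * (proj (ψ i) * pauliString a).trace := by
    intro a
    rw [Finset.sum_mul, Matrix.trace_sum]
    exact Finset.sum_congr rfl fun i _ => by rw [Matrix.smul_mul, Matrix.trace_smul, smul_eq_mul]
  calc ∑ a : Fin n → Fin 4, ‖((∑ i, (p i:ℂ) • proj (ψ i)) * pauliString a).trace‖
      ≤ ∑ a : Fin n → Fin 4, ∑ i, p i * ‖(proj (ψ i) * pauliString a).trace‖ := by
        refine Finset.sum_le_sum fun a _ => ?_
        rw [hterm a]
        refine le_trans (norm_sum_le _ _) ?_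
        refine Finset.sum_le_sum fun i _ => ?_
        rw [norm_mul, Complex.norm_real, Real.norm_eq_abs, _root_.abs_of_nonneg (hp0 i)]
    _ = ∑ i, p i * ∑ a : Fin n → Fin 4, ‖(proj (ψ i) * pauliString a).trace‖ := by
        rw [Finset.sum_comm]
        exact Finset.sum_congr rfl fun i _ => by rw [Finset.mul_sum]
    _ = ∑ i, p i * (2:ℝ)^n := by
        exact Finset.sum_congr rfl fun i _ => by rw [sum_abs_pureStab (hψ i)]
    _ = (2:ℝ)^n := by rw [← Finset.sum_mul, hp1, one_mul]


lemma holder_aux_lt {ι : Type*} [Fintype ι] (x : ι → ℝ) (hx0 : ∀ i, 0 ≤ x i) {β Y t : ℝ}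
    (hβ1 : 1 < β) (hβ2 : β < 2) (hY : 0 < Y) (hX : ∑ i, x i ≤ Y)
    (hT : ∑ i, (x i)^2 = Y * t) :
    ∑ i, x i ^ β ≤ Y * t ^ (β - 1) := by
  have ht0 : 0 ≤ t := by
    have h1 : (0:ℝ) ≤ ∑ i, (x i)^2 := Finset.sum_nonneg fun i _ => sq_nonneg _
    nlinarith
  have hpq : Real.HolderConjugate (1/(2-β)) (1/(β-1)) := by
    rw [Real.holderConjugate_iff]
    constructor
    · rw [lt_div_iff₀ (by linarith)]; linarith
    · rw [one_div, one_div, inv_inv, inv_inv]; ring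
  have key := Real.inner_le_Lp_mul_Lq_of_nonneg (s := Finset.univ) hpq
    (f := fun i => x i ^ (2-β)) (g := fun i => x i ^ (2*(β-1)))
    (fun i _ => Real.rpow_nonneg (hx0 i) _) (fun i _ => Real.rpow_nonneg (hx0 i) _)
  have e1 : ∀ i : ι, x i ^ (2-β) * x i ^ (2*(β-1)) = x i ^ β := by
    intro i
    rw [← Real.rpow_add' (hx0 i) (by intro h; nlinarith)]
    congr 1
    ring
  have e2 : ∀ i : ι, (x i ^ (2-β)) ^ (1/(2-β)) = x i := by
    intro i
    rw [← Real.rpow_mul (hx0 i)]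
    rw [mul_one_div, div_self (by linarith : (2:ℝ)-β ≠ 0), Real.rpow_one]
  have e3 : ∀ i : ι, (x i ^ (2*(β-1))) ^ (1/(β-1)) = (x i)^2 := by
    intro i
    rw [← Real.rpow_mul (hx0 i)]
    rw [show 2*(β-1) * (1/(β-1)) = 2 by
      rw [mul_one_div, mul_div_assoc, div_self (by linarith : β-(1:ℝ) ≠ 0), mul_one]]
    rw [show ((2:ℝ)) = ((2:ℕ):ℝ) by norm_num, Real.rpow_natCast]
  simp only [e1, e2, e3] at key
  have h1p : 1/(1/(2-β)) = 2-β := by rw [one_div_one_div]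
  have h1q : 1/(1/(β-1)) = β-1 := by rw [one_div_one_div]
  rw [h1p, h1q] at key
  have hxs0 : 0 ≤ ∑ i, x i := Finset.sum_nonneg fun i _ => hx0 i
  have step1 : (∑ i, x i) ^ (2-β) ≤ Y ^ (2-β) :=
    Real.rpow_le_rpow hxs0 hX (by linarith)
  have step2 : (∑ i, (x i)^2) ^ (β-1) = (Y*t) ^ (β-1) := by rw [hT]
  calc ∑ i, x i ^ β
      ≤ (∑ i, x i) ^ (2-β) * (∑ i, (x i)^2) ^ (β-1) := key
    _ ≤ Y ^ (2-β) * (Y*t) ^ (β-1) := by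
        rw [step2]
        exact mul_le_mul_of_nonneg_right step1 (Real.rpow_nonneg (by positivity) _)
    _ = Y * t ^ (β-1) := by
        rw [Real.mul_rpow hY.le ht0, ← mul_assoc, ← Real.rpow_add hY]
        norm_num

lemma holder_aux_gt {ι : Type*} [Fintype ι] (x : ι → ℝ) (hx0 : ∀ i, 0 ≤ x i) {β Y t : ℝ}
    (hβ2 : 2 < β) (hY : 0 < Y) (ht : 0 < t) (hX : ∑ i, x i ≤ Y)
    (hT : ∑ i, (x i)^2 = Y * t) :
    Y * t ^ (β - 1) ≤ ∑ i, x i ^ β := by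
  set θ : ℝ := (β-2)/(β-1) with hθ
  have hb1 : (0:ℝ) < β - 1 := by linarith
  have hb2 : (0:ℝ) < β - 2 := by linarith
  have hθ0 : 0 < θ := div_pos hb2 hb1
  have hθ1 : θ < 1 := by rw [hθ, div_lt_one hb1]; linarith
  have hpq : Real.HolderConjugate ((β-1)/(β-2)) (β-1) := by
    rw [Real.holderConjugate_iff]
    constructor
    · rw [lt_div_iff₀ hb2]; linarith
    · field_simp
      ring
  have key := Real.inner_le_Lp_mul_Lq_of_nonneg (s := Finset.univ) hpq
    (f := fun i => x i ^ θ) (g := fun i => x i ^ (β/(β-1)))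
    (fun i _ => Real.rpow_nonneg (hx0 i) _) (fun i _ => Real.rpow_nonneg (hx0 i) _)
  have e1 : ∀ i : ι, x i ^ θ * x i ^ (β/(β-1)) = (x i)^2 := by
    intro i
    rw [← Real.rpow_add' (hx0 i) (by positivity)]
    rw [show θ + β/(β-1) = 2 by rw [hθ]; field_simp; ring]

    rw [show ((2:ℝ)) = ((2:ℕ):ℝ) by norm_num, Real.rpow_natCast]
  have e2 : ∀ i : ι, (x i ^ θ) ^ ((β-1)/(β-2)) = x i := by
    intro i
    rw [← Real.rpow_mul (hx0 i), hθ]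
    rw [show (β-2)/(β-1) * ((β-1)/(β-2)) = 1 by field_simp]
    exact Real.rpow_one _
  have e3 : ∀ i : ι, (x i ^ (β/(β-1))) ^ (β-1) = x i ^ β := by
    intro i
    rw [← Real.rpow_mul (hx0 i)]
    congr 1
    field_simp
  simp only [e1, e2, e3] at key
  have h1p : 1/((β-1)/(β-2)) = θ := by rw [one_div_div, hθ]
  have h1q : (1:ℝ)/(β-1) = 1 - θ := by rw [hθ]; field_simp; ring
  rw [h1p, h1q, hT] at key
  -- key : Y * t ≤ (∑ x)^θ * (∑ x^β)^(1-θ)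
  set S : ℝ := ∑ i, x i ^ β with hS
  have hS0 : 0 ≤ S := Finset.sum_nonneg fun i _ => Real.rpow_nonneg (hx0 i) _
  have hxs0 : 0 ≤ ∑ i, x i := Finset.sum_nonneg fun i _ => hx0 i
  have step1 : (∑ i, x i) ^ θ ≤ Y ^ θ := Real.rpow_le_rpow hxs0 hX hθ0.le
  have key2 : Y * t ≤ Y ^ θ * S ^ (1-θ) :=
    key.trans (mul_le_mul_of_nonneg_right step1 (Real.rpow_nonneg hS0 _))
  have hYθ : (0:ℝ) < Y ^ θ := Real.rpow_pos_of_pos hY _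
  have key3 : Y ^ (1-θ) * t ≤ S ^ (1-θ) := by
    have hYsplit : Y * t = Y ^ θ * (Y ^ (1-θ) * t) := by
      rw [← mul_assoc, ← Real.rpow_add hY]; norm_num
    rw [hYsplit] at key2
    exact le_of_mul_le_mul_left key2 hYθ
  have key4 : (Y ^ (1-θ) * t) ^ (β-1) ≤ (S ^ (1-θ)) ^ (β-1) :=
    Real.rpow_le_rpow (by positivity) key3 hb1.le
  have eS : (S ^ (1-θ)) ^ (β-1) = S := by
    rw [← Real.rpow_mul hS0]
    rw [show (1-θ) * (β-1) = 1 by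
      rw [← h1q, one_div, inv_mul_cancel₀ (ne_of_gt hb1)]]
    exact Real.rpow_one _
  have eL : (Y ^ (1-θ) * t) ^ (β-1) = Y * t ^ (β-1) := by
    rw [Real.mul_rpow (by positivity) ht.le, ← Real.rpow_mul hY.le]
    rw [show (1-θ) * (β-1) = 1 by
      rw [← h1q, one_div, inv_mul_cancel₀ (ne_of_gt hb1)]]
    rw [Real.rpow_one]
  rw [eS, eL] at key4
  exact key4


/-- `W_α` is a genuine magic witness: if `W_α(ρ) > 0` for some
`α ≥ 1/2`, `α ≠ 1`, then `ρ` is not a mixed stabilizer state. -/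
theorem witness_pos_implies_not_stab {n : ℕ} (ρ : Matrix (QIdx n) (QIdx n) ℂ)
    (hρ : IsState ρ) (α : ℝ) (hα : (1:ℝ)/2 ≤ α) (hα1 : α ≠ 1)
    (hW : 0 < Wit α ρ) : ¬ IsMixedStab ρ := by
  intro hstab
  have hherm : ρ.IsHermitian := hρ.1.1
  have hx0 : ∀ a : Fin n → Fin 4, 0 ≤ ‖(ρ * pauliString a).trace‖ :=
    fun a => norm_nonneg _
  have hX : ∑ a : Fin n → Fin 4, ‖(ρ * pauliString a).trace‖ ≤ (2:ℝ)^n :=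
    sum_abs_mixedStab hstab
  have ha0 : ‖(ρ * pauliString (fun _ : Fin n => (0:Fin 4))).trace‖ = 1 := by
    rw [pauliString_zero_eq_one, Matrix.mul_one, hρ.2]
    simp
  set t : ℝ := ((ρ * ρ).trace).re with htdef
  have hT : ∑ a : Fin n → Fin 4, (‖(ρ * pauliString a).trace‖)^2 = (2:ℝ)^n * t := by
    have hC := trace_pauli_sum ρ ρ
    have hre : ∀ a : Fin n → Fin 4, (ρ * pauliString a).trace * (ρ * pauliString a).trace
        = ((((ρ * pauliString a).trace.re)^2 : ℝ) : ℂ) := by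
      intro a
      conv_lhs => rw [trace_pauli_real hherm a]
      push_cast
      ring
    rw [Finset.sum_congr rfl (fun a _ => hre a), ← Complex.ofReal_sum,
      show ((2:ℂ)^n) = (((2:ℝ)^n : ℝ) : ℂ) by push_cast; ring] at hC
    have hre2 := congrArg Complex.re hC
    rw [Complex.ofReal_re, Complex.re_ofReal_mul] at hre2
    have hxa : ∀ a : Fin n → Fin 4,
        (‖(ρ * pauliString a).trace‖)^2 = ((ρ * pauliString a).trace.re)^2 := by
      intro a
      conv_lhs => rw [trace_pauli_real hherm a]
      rw [Complex.norm_real, Real.norm_eq_abs, _root_.sq_abs]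
    rw [Finset.sum_congr rfl (fun a _ => hxa a)]
    exact hre2
  have h2n : (0:ℝ) < (2:ℝ)^n := by positivity
  have h1leT : (1:ℝ) ≤ ∑ a : Fin n → Fin 4, (‖(ρ * pauliString a).trace‖)^2 := by
    have := Finset.single_le_sum
      (f := fun a : Fin n → Fin 4 => (‖(ρ * pauliString a).trace‖)^2)
      (fun a _ => sq_nonneg _) (Finset.mem_univ (fun _ : Fin n => (0:Fin 4)))
    simpa [ha0] using this
  have ht_pos : 0 < t := by nlinarith [hT, h1leT]
  have hApos : 0 < Amom α ρ := by
    have h1le : (1:ℝ) ≤ ∑ a : Fin n → Fin 4,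
        (‖(ρ * pauliString a).trace‖) ^ (2*α) := by
      have := Finset.single_le_sum
        (f := fun a : Fin n → Fin 4 => (‖(ρ * pauliString a).trace‖) ^ (2*α))
        (fun a _ => Real.rpow_nonneg (hx0 a) _) (Finset.mem_univ (fun _ : Fin n => (0:Fin 4)))
      simpa [ha0] using this
    rw [Amom]
    have : (0:ℝ) < ((2:ℝ)^n)⁻¹ := by positivity
    nlinarith
  have hS2 : S2 ρ = - Real.log t := rfl
  rcases eq_or_lt_of_le hα with heq | hgt
  · -- α = 1/2
    have hA1 : Amom α ρ ≤ 1 := by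
      rw [Amom, ← heq]
      have : ∀ a : Fin n → Fin 4,
          (‖(ρ * pauliString a).trace‖) ^ (2*((1:ℝ)/2))
          = ‖(ρ * pauliString a).trace‖ := by
        intro a
        norm_num
      rw [Finset.sum_congr rfl (fun a _ => this a)]
      rw [inv_mul_le_iff₀ h2n, mul_one]
      exact hX
    have hlog : Real.log (Amom α ρ) ≤ 0 := Real.log_nonpos hApos.le hA1
    rw [Wit, ← heq] at hW
    rw [← heq] at hlog
    norm_num at hW
    linarith
  · rcases lt_or_gt_of_ne hα1 with hlt | hgt1
    · -- 1/2 < α < 1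
      have hβ1 : 1 < 2*α := by linarith
      have hβ2 : 2*α < 2 := by linarith
      have hhold := holder_aux_lt (fun a : Fin n → Fin 4 =>
          ‖(ρ * pauliString a).trace‖) hx0 hβ1 hβ2 h2n hX hT
      have hA : Amom α ρ ≤ t ^ (2*α - 1) := by
        rw [Amom, inv_mul_le_iff₀ h2n]
        exact hhold
      have hlog : Real.log (Amom α ρ) ≤ (2*α - 1) * Real.log t := by
        calc Real.log (Amom α ρ) ≤ Real.log (t ^ (2*α-1)) := Real.log_le_log hApos hA
          _ = (2*α - 1) * Real.log t := Real.log_rpow ht_pos _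
      have h1a : (0:ℝ) < 1 - α := by linarith
      have hWit : Wit α ρ = (1/(1-α)) * (Real.log (Amom α ρ) + (1 - 2*α) * Real.log t) := by
        rw [Wit, hS2]; ring
      have hcomb : Real.log (Amom α ρ) + (1 - 2*α) * Real.log t ≤ 0 := by linarith
      have : Wit α ρ ≤ 0 := by
        rw [hWit]
        exact mul_nonpos_of_nonneg_of_nonpos (by positivity) hcomb
      linarith
    · -- α > 1
      have hβ2 : 2 < 2*α := by linarith
      have hhold := holder_aux_gt (fun a : Fin n → Fin 4 =>
          ‖(ρ * pauliString a).trace‖) hx0 hβ2 h2n ht_pos hX hT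
      have hA : t ^ (2*α - 1) ≤ Amom α ρ := by
        rw [Amom]
        calc t ^ (2*α - 1) = ((2:ℝ)^n)⁻¹ * ((2:ℝ)^n * t ^ (2*α - 1)) := by
              field_simp
          _ ≤ ((2:ℝ)^n)⁻¹ * ∑ a : Fin n → Fin 4,
              (‖(ρ * pauliString a).trace‖) ^ (2*α) :=
            mul_le_mul_of_nonneg_left hhold (by positivity)
      have hlog : (2*α - 1) * Real.log t ≤ Real.log (Amom α ρ) := by
        calc (2*α - 1) * Real.log t = Real.log (t ^ (2*α-1)) := (Real.log_rpow ht_pos _).symm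
          _ ≤ Real.log (Amom α ρ) := Real.log_le_log (Real.rpow_pos_of_pos ht_pos _) hA
      have h1a : 1 - α < 0 := by linarith
      have hWit : Wit α ρ = (1/(1-α)) * (Real.log (Amom α ρ) + (1 - 2*α) * Real.log t) := by
        rw [Wit, hS2]; ring
      have hcomb : 0 ≤ Real.log (Amom α ρ) + (1 - 2*α) * Real.log t := by linarith
      have : Wit α ρ ≤ 0 := by
        rw [hWit]
        apply mul_nonpos_of_nonpos_of_nonneg _ hcomb
        apply div_nonpos_of_nonneg_of_nonpos zero_le_one h1a.le
      linarith

end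
end

section
/- The stabilizer fidelity is lower bounded by the log-free robustness of magic: for every n-qubit state ρ that admits at least one finite real decomposition into pure stabilizer projectors, D_F(ρ) ≤ LR(ρ). -/
open Matrix Complex BigOperators
open scoped ComplexOrder

noncomputable section

section Aux

variable {N : Type*} [Fintype N] [DecidableEq N]

/-- Square root of a PSD matrix via the spectral decomposition. -/
def Matrix.PosSemidef.sqrt {A : Matrix N N ℂ} (h : A.PosSemidef) : Matrix N N ℂ :=
  (h.1.eigenvectorUnitary : Matrix N N ℂ) *
    diagonal ((↑) ∘ Real.sqrt ∘ h.1.eigenvalues) *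
    (star h.1.eigenvectorUnitary : Matrix N N ℂ)

lemma Matrix.PosSemidef.sqrt_eq_cfc {A : Matrix N N ℂ} (h : A.PosSemidef) :
    h.sqrt = cfc Real.sqrt A := by
  rw [h.1.cfc_eq, Matrix.IsHermitian.cfc, Unitary.conjStarAlgAut_apply]
  rfl

open scoped MatrixOrder in
lemma Matrix.PosSemidef.posSemidef_sqrt {A : Matrix N N ℂ} (h : A.PosSemidef) :
    h.sqrt.PosSemidef := by
  rw [h.sqrt_eq_cfc]
  exact Matrix.nonneg_iff_posSemidef.mp (cfc_nonneg fun x _ => Real.sqrt_nonneg x)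

open scoped MatrixOrder in
lemma Matrix.PosSemidef.sqrt_mul_self {A : Matrix N N ℂ} (h : A.PosSemidef) :
    h.sqrt * h.sqrt = A := by
  have hA : 0 ≤ A := Matrix.nonneg_iff_posSemidef.mpr h
  rw [h.sqrt_eq_cfc, ← cfc_mul Real.sqrt Real.sqrt A]
  conv_rhs => rw [← cfc_id' ℝ A]
  refine cfc_congr fun x hx => ?_
  exact Real.mul_self_sqrt (spectrum_nonneg_of_nonneg hA hx)

lemma psd_trace_re_nonneg {M : Matrix N N ℂ} (hM : M.PosSemidef) : 0 ≤ M.trace.re := by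
  have h : ∀ i, 0 ≤ (M i i).re := by
    intro i
    have := hM.dotProduct_mulVec_nonneg (Pi.single i 1)
    have h2 : star (Pi.single i 1 : N → ℂ) ⬝ᵥ M *ᵥ Pi.single i 1 = M i i := by
      simp [dotProduct, Matrix.mulVec, Pi.single_apply, Finset.sum_ite_eq]
    rw [h2] at this
    exact ((Complex.le_def).mp this).1
  have : M.trace.re = ∑ i, (M i i).re := by
    simp [Matrix.trace, Matrix.diag, Complex.re_sum]
  rw [this]
  exact Finset.sum_nonneg fun i _ => h i

lemma sqrt_dominates {B C : Matrix N N ℂ} (hB : B.PosSemidef) (hC : C.PosSemidef)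
    (h : (B - C * C).PosSemidef) : (hB.sqrt - C).PosSemidef := by
  set D := hB.sqrt with hDdef
  have hD : D.PosSemidef := hB.posSemidef_sqrt
  have hDD : D * D = B := hB.sqrt_mul_self
  have hMh : (D - C).IsHermitian := hD.1.sub hC.1
  apply hMh.posSemidef_iff_eigenvalues_nonneg.mpr
  intro i
  by_contra hneg
  push_neg at hneg
  set lam := hMh.eigenvalues i with hlam
  have hlamneg : lam < 0 := hneg
  set v : N → ℂ := ⇑(hMh.eigenvectorBasis i) with hv
  have hmv : (D - C) *ᵥ v = (lam : ℂ) • v := by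
    have h0 := hMh.mulVec_eigenvectorBasis i
    rw [← hlam, ← hv] at h0
    rw [h0]; funext j; simp [Complex.real_smul]
  have hkey : B - C * C = D * (D - C) + (D - C) * C := by
    rw [mul_sub, sub_mul, hDD]; abel
  have hq := h.dotProduct_mulVec_nonneg v
  rw [hkey] at hq
  have hqeq : star v ⬝ᵥ (D * (D - C) + (D - C) * C) *ᵥ v
      = (lam : ℂ) * (star v ⬝ᵥ D *ᵥ v) + (lam : ℂ) * (star v ⬝ᵥ C *ᵥ v) := by
    rw [Matrix.add_mulVec, dotProduct_add]
    congr 1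
    · rw [← Matrix.mulVec_mulVec, hmv, Matrix.mulVec_smul, dotProduct_smul]
      simp [smul_eq_mul]
    · rw [← Matrix.mulVec_mulVec, Matrix.dotProduct_mulVec]
      have hvm : star v ᵥ* (D - C) = (lam : ℂ) • star v := by
        have h1 : star ((D - C) *ᵥ v) = star v ᵥ* (D - C)ᴴ := Matrix.star_mulVec _ _
        rw [hMh.eq] at h1
        rw [← h1, hmv, star_smul]
        simp
      rw [hvm, smul_dotProduct]
      simp [smul_eq_mul]
  rw [hqeq, ← mul_add] at hq
  set qD := star v ⬝ᵥ D *ᵥ v with hqDdef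
  set qC := star v ⬝ᵥ C *ᵥ v with hqCdef
  have hqD := hD.dotProduct_mulVec_nonneg v
  have hqC := hC.dotProduct_mulVec_nonneg v
  rw [← hqDdef] at hqD; rw [← hqCdef] at hqC
  obtain ⟨hqDre, hqDim⟩ := (Complex.le_def).mp hqD
  obtain ⟨hqCre, hqCim⟩ := (Complex.le_def).mp hqC
  simp only [Complex.zero_re, Complex.zero_im] at hqDre hqDim hqCre hqCim
  obtain ⟨hqre, _⟩ := (Complex.le_def).mp hq
  have him : (qD + qC).im = 0 := by simp [Complex.add_im, ← hqDim, ← hqCim]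
  have hre : ((lam : ℂ) * (qD + qC)).re = lam * (qD.re + qC.re) := by
    simp [Complex.mul_re, him, Complex.add_re]
  rw [hre] at hqre
  simp only [Complex.zero_re] at hqre
  have hsum0 : qD.re + qC.re = 0 := by nlinarith
  have hqDre0 : qD.re = 0 := by linarith
  have hqCre0 : qC.re = 0 := by linarith
  have hqD0 : qD = 0 := Complex.ext hqDre0 (by simp [← hqDim])
  have hqC0 : qC = 0 := Complex.ext hqCre0 (by simp [← hqCim])
  have hDv : D *ᵥ v = 0 := (hD.dotProduct_mulVec_zero_iff v).mp hqD0
  have hCv : C *ᵥ v = 0 := (hC.dotProduct_mulVec_zero_iff v).mp hqC0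
  have hMv0 : (D - C) *ᵥ v = 0 := by rw [Matrix.sub_mulVec, hDv, hCv, sub_zero]
  rw [hmv] at hMv0
  have hv0 : v = 0 := by
    have : (lam : ℂ) ≠ 0 := by exact_mod_cast hlamneg.ne
    exact (smul_eq_zero.mp hMv0).resolve_left this
  have hvn : ‖hMh.eigenvectorBasis i‖ = 1 := hMh.eigenvectorBasis.orthonormal.1 i
  have : hMh.eigenvectorBasis i = 0 := by
    ext j
    have := congrFun hv0 j
    simpa [hv] using this
  rw [this] at hvn
  simp at hvn

lemma psd_smul_real {M : Matrix N N ℂ} (hM : M.PosSemidef) {c : ℝ} (hc : 0 ≤ c) :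
    ((c : ℂ) • M).PosSemidef := by
  refine Matrix.PosSemidef.of_dotProduct_mulVec_nonneg ?_ ?_
  · show ((c : ℂ) • M)ᴴ = (c : ℂ) • M
    rw [Matrix.conjTranspose_smul, hM.1.eq]
    simp [Complex.star_def, Complex.conj_ofReal]
  · intro x
    have h := hM.dotProduct_mulVec_nonneg x
    have h2 : star x ⬝ᵥ ((c : ℂ) • M) *ᵥ x = (c : ℂ) * (star x ⬝ᵥ M *ᵥ x) := by
      rw [Matrix.smul_mulVec, dotProduct_smul, smul_eq_mul]
    rw [h2]
    have hc' : 0 ≤ (c : ℂ) := by exact_mod_cast hc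
    exact mul_nonneg hc' h

lemma psd_sum {ι : Type*} (s : Finset ι) (f : ι → Matrix N N ℂ)
    (h : ∀ i ∈ s, (f i).PosSemidef) : (∑ i ∈ s, f i).PosSemidef :=
  Finset.sum_induction f _ (fun _ _ ha hb => ha.add hb) Matrix.PosSemidef.zero h

end Aux

lemma proj_posSemidef {n : ℕ} (φ : QIdx n → ℂ) : (proj φ).PosSemidef := by
  have h : proj φ = Matrix.replicateCol Unit φ * (Matrix.replicateCol Unit φ)ᴴ := by
    rw [Matrix.conjTranspose_replicateCol, proj, Matrix.vecMulVec_eq Unit]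
  rw [h]
  exact Matrix.posSemidef_self_mul_conjTranspose _

lemma proj_trace {n : ℕ} (φ : QIdx n → ℂ) : (proj φ).trace = star φ ⬝ᵥ φ := by
  simp [proj, Matrix.trace, Matrix.diag, Matrix.vecMulVec_apply, dotProduct, mul_comm]

lemma zeroVec_dot (n : ℕ) : star (zeroVec n) ⬝ᵥ zeroVec n = 1 := by
  classical
  have h : ∀ i : QIdx n, (star (zeroVec n)) i * zeroVec n i
      = if i = (fun _ => 0) then (1 : ℂ) else 0 := by
    intro i
    simp only [zeroVec, Pi.star_apply]
    by_cases h : ∀ k, i k = 0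
    · rw [if_pos h, if_pos (funext h)]
      simp
    · rw [if_neg h, if_neg (fun he => h (fun k => congrFun he k))]
      simp
  rw [dotProduct, Finset.sum_congr rfl (fun i _ => h i)]
  simp

lemma pureStab_dot {n : ℕ} {φ : QIdx n → ℂ} (h : IsPureStab φ) : star φ ⬝ᵥ φ = 1 := by
  obtain ⟨U, ⟨hU, -⟩, rfl⟩ := h
  have hU1 : Uᴴ * U = 1 := by
    simpa [Matrix.star_eq_conjTranspose] using hU.1
  rw [Matrix.star_mulVec, Matrix.dotProduct_mulVec, Matrix.vecMul_vecMul, hU1,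
    Matrix.vecMul_one]
  exact zeroVec_dot n

/-- the stabilizer fidelity is bounded by the log-free robustness
of magic: `D_F(ρ) ≤ LR(ρ)`. -/
theorem stabFidelity_le_LR {n : ℕ} (ρ : Matrix (QIdx n) (QIdx n) ℂ)
    (hρ : IsState ρ) (hdec : (StabDecomps ρ).Nonempty) :
    DF ρ ≤ LR ρ := by
  obtain ⟨hpsd, htr1⟩ := hρ
  refine le_csInf hdec ?_
  rintro r ⟨k, x, ψ, hψ, hρdec, rfl⟩
  set S : ℝ := ∑ i, |x i| with hSdef
  have htrproj : ∀ i, (proj (ψ i)).trace = 1 := fun i => by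
    rw [proj_trace]; exact pureStab_dot (hψ i)
  have hsum1 : ∑ i, x i = 1 := by
    have h1 : ρ.trace = ∑ i, (x i : ℂ) := by
      rw [hρdec, Matrix.trace_sum]
      refine Finset.sum_congr rfl fun i _ => ?_
      rw [Matrix.trace_smul, htrproj i, smul_eq_mul, mul_one]
    rw [htr1] at h1
    have h2 : ((∑ i, x i : ℝ) : ℂ) = 1 := by push_cast; rw [← h1]
    exact_mod_cast h2
  have hS1 : 1 ≤ S := by
    calc (1:ℝ) = |∑ i, x i| := by rw [hsum1]; simp
    _ ≤ ∑ i, |x i| := Finset.abs_sum_le_sum_abs _ _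
  have hSpos : 0 < S := lt_of_lt_of_le one_pos hS1
  set σ : Matrix (QIdx n) (QIdx n) ℂ := ∑ i, ((|x i| / S : ℝ) : ℂ) • proj (ψ i) with hσdef
  have hmix : IsMixedStab σ := by
    refine ⟨k, fun i => |x i| / S, ψ, fun i => div_nonneg (abs_nonneg _) hSpos.le, ?_, hψ, rfl⟩
    rw [← Finset.sum_div]
    field_simp
    exact hSdef.symm
  have hσpsd : σ.PosSemidef := psd_sum _ _ fun i _ =>
    psd_smul_real (proj_posSemidef _) (div_nonneg (abs_nonneg _) hSpos.le)
  have hdiff : ((S : ℂ) • σ - ρ).PosSemidef := by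
    have heq : (S : ℂ) • σ - ρ = ∑ i, ((|x i| - x i : ℝ) : ℂ) • proj (ψ i) := by
      rw [hσdef, hρdec, Finset.smul_sum, ← Finset.sum_sub_distrib]
      refine Finset.sum_congr rfl fun i _ => ?_
      rw [smul_smul, ← sub_smul]
      congr 1
      push_cast
      field_simp
    rw [heq]
    exact psd_sum _ _ fun i _ =>
      psd_smul_real (proj_posSemidef _) (sub_nonneg.mpr (le_abs_self _))
  set D := hpsd.sqrt with hD
  have hDpsd : D.PosSemidef := hpsd.posSemidef_sqrt
  have hDher : Dᴴ = D := hDpsd.1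
  have hDD : D * D = ρ := hpsd.sqrt_mul_self
  set B := D * σ * D with hB
  have hBpsd : B.PosSemidef := by
    have h := hσpsd.mul_mul_conjTranspose_same D
    rwa [hDher] at h
  set c : ℝ := (Real.sqrt S)⁻¹ with hc
  have hcpos : 0 < c := inv_pos.mpr (Real.sqrt_pos.mpr hSpos)
  set C := ((c : ℝ) : ℂ) • ρ with hCdef
  have hCpsd : C.PosSemidef := psd_smul_real hpsd hcpos.le
  have hBC : (B - C * C).PosSemidef := by
    have hcc : c * c = S⁻¹ := by
      rw [hc, ← mul_inv, Real.mul_self_sqrt hSpos.le]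
    have hCC : C * C = ((S⁻¹ : ℝ) : ℂ) • (ρ * ρ) := by
      rw [hCdef, Matrix.smul_mul, Matrix.mul_smul, smul_smul, ← Complex.ofReal_mul, hcc]
    have hDρD : D * ρ * D = ρ * ρ := by rw [← hDD]; noncomm_ring
    have hexp : D * ((S : ℂ) • σ - ρ) * D = (S : ℂ) • B - ρ * ρ := by
      rw [Matrix.mul_sub, Matrix.sub_mul, Matrix.mul_smul, Matrix.smul_mul, hDρD, hB]
    have hSS : ((S⁻¹ : ℝ) : ℂ) • ((S : ℂ) • B) = B := by
      rw [smul_smul]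
      have h3 : ((S⁻¹ : ℝ) : ℂ) * (S : ℂ) = 1 := by
        push_cast
        field_simp
      rw [h3, one_smul]
    have hkey : B - C * C = ((S⁻¹ : ℝ) : ℂ) • (D * ((S : ℂ) • σ - ρ) * D) := by
      rw [hexp, smul_sub, hSS, hCC]
    rw [hkey]
    refine psd_smul_real ?_ (inv_nonneg.mpr hSpos.le)
    have h4 := hdiff.mul_mul_conjTranspose_same D
    rwa [hDher] at h4
  have hmono := sqrt_dominates hBpsd hCpsd hBC
  have htrC : C.trace = (c : ℂ) := by
    rw [hCdef, Matrix.trace_smul, htr1, smul_eq_mul, mul_one]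
  have htrB : c ≤ hBpsd.sqrt.trace.re := by
    have h0 := psd_trace_re_nonneg hmono
    rw [Matrix.trace_sub, Complex.sub_re, htrC] at h0
    simp only [Complex.ofReal_re] at h0
    linarith
  have hfid : S⁻¹ ≤ fidelity ρ σ := by
    have hps : psdSqrt ρ = D := by rw [psdSqrt, dif_pos hpsd]; rfl
    have hpsB : psdSqrt B = hBpsd.sqrt := by rw [psdSqrt, dif_pos hBpsd]; rfl
    have hfe : fidelity ρ σ = (hBpsd.sqrt.trace.re) ^ 2 := by
      rw [fidelity, hps, ← hB, hpsB]
    rw [hfe]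
    calc S⁻¹ = c ^ 2 := by rw [hc, sq, ← mul_inv, Real.mul_self_sqrt hSpos.le]
    _ ≤ _ := pow_le_pow_left₀ hcpos.le htrB 2
  have hfidpos : 0 < fidelity ρ σ := lt_of_lt_of_le (inv_pos.mpr hSpos) hfid
  have hlog : -Real.log (fidelity ρ σ) ≤ Real.log S := by
    have h5 := Real.log_le_log (inv_pos.mpr hSpos) hfid
    rw [Real.log_inv] at h5
    linarith
  have hmem : -Real.log (fidelity ρ σ)
      ∈ {r | ∃ τ, IsMixedStab τ ∧ r = -Real.log (fidelity ρ τ)} := ⟨σ, hmix, rfl⟩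
  rw [DF]
  by_cases hb : BddBelow {r | ∃ τ, IsMixedStab τ ∧ r = -Real.log (fidelity ρ τ)}
  · exact le_trans (csInf_le hb hmem) hlog
  · rw [Real.sInf_of_not_bddBelow hb]
    exact Real.log_nonneg hS1

end
end
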